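/- Let T be a plane binary tree with n internal nodes. A linear extension of T is a bijective labeling e of the internal nodes of T by {1, …, n} such that every internal node's label is smaller than the labels of its internal-node children; let E(T) be the set of linear extensions of T. For e ∈ E(T), let w_e ∈ S_n be the word obtained by reading the labels of the internal nodes of T from left to right (in-order). Then: (i) the weight generating function of paths from the empty tree ∅ to T in the graph Tree, namely ∑ over all sequences ∅ = T_0, T_1, …, T_n = T together with indices i_1, …, i_n such that T_k = SG(T_{k-1}, i_k), of q^{i_1 + ⋯ + i_n}, equals ∑_{e ∈ E(T)} q^{inv(w_e)}; and (ii) there is exactly one sequence ∅ = T_0, T_1, …, T_n = T with T_{k-1} = (T_k)* for all k. -/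

import Mathlib

open Polynomial
open scoped Classical

/-- A plane binary tree: either the empty tree `∅` (a single leaf attached to the root,
no internal nodes), or the graft `T₁ ∨ T₂` of two plane binary trees (joined at a new
internal node attached to a new root). -/
inductive PBT : Type
  | empty : PBT
  | graft : PBT → PBT → PBT
deriving DecidableEq

namespace PBT

/-- The number of internal nodes of a plane binary tree. -/
def size : PBT → ℕ
  | empty => 0
  | graft l r => size l + size r + 1

/-- Splicing a plane binary tree `T` at its `i`-th leaf (leaves are numbered
`0, 1, …, size T` from left to right): following the path from leaf `i` to the root,
the edges weakly to the left form the first tree (with `i` internal nodes) and the edges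
weakly to the right form the second tree (with `size T - i` internal nodes). -/
def splice : PBT → ℕ → PBT × PBT
  | empty, _ => (empty, empty)
  | graft l r, i =>
      if i ≤ size l then ((splice l i).1, graft (splice l i).2 r)
      else (graft l (splice r (i - size l - 1)).1, (splice r (i - size l - 1)).2)

/-- `SG(T, i)`: splice `T` at leaf `i` into `(T₁, T₂)` and graft, giving `T₁ ∨ T₂`. -/
def SG (T : PBT) (i : ℕ) : PBT :=
  graft (splice T i).1 (splice T i).2

/-- `T*`: the tree obtained from `T` by removing the leftmost leaf and erasing its
parent internal node: `(∅ ∨ T₂)* = T₂` and `(T₁ ∨ T₂)* = T₁* ∨ T₂` for `T₁ ≠ ∅`. -/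
def star : PBT → PBT
  | empty => empty
  | graft empty r => r
  | graft (graft a b) r => graft (star (graft a b)) r

end PBT

/-- A plane binary tree whose internal nodes carry natural-number labels. -/
inductive LPBT : Type
  | empty : LPBT
  | graft : LPBT → ℕ → LPBT → LPBT
deriving DecidableEq

namespace LPBT

/-- The underlying (unlabeled) plane binary tree of a labeled tree. -/
def shape : LPBT → PBT
  | empty => PBT.empty
  | graft l _ r => PBT.graft (shape l) (shape r)

/-- The word reading the labels of the internal nodes from left to right (in-order). -/
def inorder : LPBT → List ℕ
  | empty => []
  | graft l a r => inorder l ++ a :: inorder r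

/-- The label of the root internal node, if any. -/
def rootLabel? : LPBT → Option ℕ
  | empty => none
  | graft _ a _ => some a

/-- The increasing (linear-extension) condition: every internal node's label is smaller
than the labels of its internal-node children. -/
def IsIncreasing : LPBT → Prop
  | empty => True
  | graft l a r =>
      (∀ b ∈ rootLabel? l, a < b) ∧ (∀ b ∈ rootLabel? r, a < b) ∧
        IsIncreasing l ∧ IsIncreasing r

end LPBT

/-- The set of linear extensions of a plane binary tree `T` with `n` internal nodes,
encoded as labeled trees of shape `T` whose labels are a bijective labeling by
`{1, …, n}` (the in-order word is a rearrangement of `[1, …, n]`) satisfying the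
increasing condition. -/
def linExts (T : PBT) : Set LPBT :=
  {L : LPBT | L.shape = T ∧ L.inorder.Perm (List.range' 1 T.size) ∧ L.IsIncreasing}

/-- The number of inversions of a word `w`: the number of pairs of positions `i < j`
with `w_i > w_j`. -/
def invCount (w : List ℕ) : ℕ :=
  (Finset.univ.filter fun p : Fin w.length × Fin w.length =>
    p.1 < p.2 ∧ w.get p.2 < w.get p.1).card


/-! ### Auxiliary development -/

namespace PBT

lemma size_eq_zero {T : PBT} (h : T.size = 0) : T = empty := by
  cases T with
  | empty => rfl
  | graft l r => simp [size] at h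

lemma splice_size_add (T : PBT) (i : ℕ) :
    (splice T i).1.size + (splice T i).2.size = T.size := by
  induction T generalizing i with
  | empty => simp [splice, size]
  | graft l r ihl ihr =>
    by_cases h : i ≤ size l
    · simp only [splice, h, if_true, size]
      have := ihl i
      omega
    · simp only [splice, h, if_false, size]
      have := ihr (i - size l - 1)
      omega

lemma size_SG (T : PBT) (i : ℕ) : (SG T i).size = T.size + 1 := by
  simp only [SG, size]
  have := splice_size_add T i
  omega

lemma size_star (T : PBT) : (star T).size = T.size - 1 := by
  induction T with
  | empty => simp [star, size]
  | graft l r ihl ihr =>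
    cases l with
    | empty => simp [star, size]
    | graft a b =>
      simp only [star, size] at *
      omega


end PBT

namespace LPBT

def size : LPBT → ℕ
  | empty => 0
  | graft l _ r => size l + size r + 1

@[simp] lemma shape_size (L : LPBT) : L.shape.size = L.size := by
  induction L with
  | empty => rfl
  | graft l a r ihl ihr => simp [shape, PBT.size, size, ihl, ihr]

@[simp] lemma inorder_length (L : LPBT) : L.inorder.length = L.size := by
  induction L with
  | empty => rfl
  | graft l a r ihl ihr => simp [inorder, size, ihl, ihr]; omega

lemma size_eq_zero {L : LPBT} (h : L.size = 0) : L = empty := by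
  cases L with
  | empty => rfl
  | graft l a r => simp [size] at h

lemma root_mem {L : LPBT} {b : ℕ} (h : b ∈ L.rootLabel?) : b ∈ L.inorder := by
  cases L with
  | empty => simp [rootLabel?] at h
  | graft l a r =>
    simp [rootLabel?] at h
    simp [inorder, h]

lemma rootmin {L : LPBT} (hL : L.IsIncreasing) :
    ∀ b ∈ L.rootLabel?, ∀ c ∈ L.inorder, b ≤ c := by
  induction L with
  | empty => simp [rootLabel?]
  | graft l a r ihl ihr =>
    obtain ⟨h1, h2, hl, hr⟩ := hL
    intro b hb c hc
    simp [rootLabel?] at hb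
    subst hb
    simp only [inorder, List.mem_append, List.mem_cons] at hc
    rcases hc with hc | hc | hc
    · cases l with
      | empty => simp [inorder] at hc
      | graft p x q =>
        have hx := h1 x (by simp [rootLabel?])
        have := ihl hl x (by simp [rootLabel?]) c hc
        omega
    · omega
    · cases r with
      | empty => simp [inorder] at hc
      | graft p x q =>
        have hx := h2 x (by simp [rootLabel?])
        have := ihr hr x (by simp [rootLabel?]) c hc
        omega

/-- If the root of `L` dominates `a` from below and `L` is increasing then `a` is less
than every label of `L`. -/
lemma root_lt_all {L : LPBT} {a : ℕ} (h : ∀ b ∈ L.rootLabel?, a < b)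
    (hL : L.IsIncreasing) : ∀ c ∈ L.inorder, a < c := by
  intro c hc
  cases L with
  | empty => simp [inorder] at hc
  | graft l x r =>
    have hx := h x (by simp [rootLabel?])
    have := rootmin hL x (by simp [rootLabel?]) c hc
    omega

def lsplice : LPBT → ℕ → LPBT × LPBT
  | empty, _ => (empty, empty)
  | graft l a r, i =>
      if i ≤ size l then ((lsplice l i).1, graft (lsplice l i).2 a r)
      else (graft l a (lsplice r (i - size l - 1)).1, (lsplice r (i - size l - 1)).2)

lemma lsplice_shape (L : LPBT) (i : ℕ) :
    PBT.splice L.shape i = ((lsplice L i).1.shape, (lsplice L i).2.shape) := by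
  induction L generalizing i with
  | empty => simp [shape, PBT.splice, lsplice]
  | graft l a r ihl ihr =>
    by_cases h : i ≤ l.size
    · simp only [shape, PBT.splice, lsplice, shape_size, h, if_true, ihl]
    · simp only [shape, PBT.splice, lsplice, shape_size, h, if_false, ihr]

@[simp] lemma lsplice_zero (L : LPBT) : lsplice L 0 = (empty, L) := by
  induction L with
  | empty => rfl
  | graft l a r ihl ihr => simp [lsplice, ihl]

@[simp] lemma lsplice_self (L : LPBT) : lsplice L L.size = (L, empty) := by
  induction L with
  | empty => rfl
  | graft l a r ihl ihr =>
    have h : ¬ (size l + size r + 1 ≤ size l) := by omega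
    simp only [lsplice, size, h, if_false]
    have : size l + size r + 1 - size l - 1 = size r := by omega
    rw [this, ihr]

lemma lsplice_inorder (L : LPBT) (i : ℕ) (h : i ≤ L.size) :
    (lsplice L i).1.inorder ++ (lsplice L i).2.inorder = L.inorder ∧
      (lsplice L i).1.size = i := by
  induction L generalizing i with
  | empty =>
    simp [size] at h
    simp [lsplice, inorder, size, h]
  | graft l a r ihl ihr =>
    by_cases h' : i ≤ l.size
    · obtain ⟨e1, e2⟩ := ihl i h'
      simp only [lsplice, h', if_true, inorder]
      constructor
      · rw [← List.append_assoc, e1]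
      · exact e2
    · have hr' : i - l.size - 1 ≤ r.size := by simp [size] at h; omega
      obtain ⟨e1, e2⟩ := ihr _ hr'
      simp only [lsplice, h', if_false, inorder, size]
      constructor
      · rw [List.append_assoc, List.cons_append, e1]
      · omega

lemma lsplice_sizes (L : LPBT) (i : ℕ) (h : i ≤ L.size) :
    (lsplice L i).1.size = i ∧ (lsplice L i).2.size = L.size - i := by
  obtain ⟨e1, e2⟩ := lsplice_inorder L i h
  refine ⟨e2, ?_⟩
  have := congrArg List.length e1
  simp only [List.length_append, inorder_length] at this
  omega

lemma lsplice_mem {L : LPBT} {i b : ℕ} (h : i ≤ L.size)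
    (hb : b ∈ (lsplice L i).1.inorder ∨ b ∈ (lsplice L i).2.inorder) :
    b ∈ L.inorder := by
  rw [← (lsplice_inorder L i h).1]
  rcases hb with hb | hb
  · exact List.mem_append_left _ hb
  · exact List.mem_append_right _ hb

lemma increasing_lsplice {L : LPBT} (hL : L.IsIncreasing) (i : ℕ) (h : i ≤ L.size) :
    (lsplice L i).1.IsIncreasing ∧ (lsplice L i).2.IsIncreasing := by
  induction L generalizing i with
  | empty => simp [lsplice, IsIncreasing]
  | graft l a r ihl ihr =>
    obtain ⟨h1, h2, hl, hr⟩ := hL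
    by_cases h' : i ≤ l.size
    · obtain ⟨p1, p2⟩ := ihl hl i h'
      simp only [lsplice, h', if_true]
      refine ⟨p1, ?_, h2, p2, hr⟩
      intro b hb
      exact root_lt_all h1 hl b (lsplice_mem h' (Or.inr (root_mem hb)))
    · have hr' : i - l.size - 1 ≤ r.size := by simp [size] at h; omega
      obtain ⟨q1, q2⟩ := ihr hr _ hr'
      simp only [lsplice, h', if_false]
      refine ⟨⟨h1, ?_, hl, q1⟩, q2⟩
      intro b hb
      exact root_lt_all h2 hr b (lsplice_mem hr' (Or.inl (root_mem hb)))

def lmerge : LPBT → LPBT → LPBT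
  | empty, r => r
  | l, empty => l
  | graft a x b, graft c y d =>
      if x < y then graft a x (lmerge b (graft c y d))
      else graft (lmerge (graft a x b) c) y d
termination_by l r => l.size + r.size
decreasing_by
  · simp [size]
  · simp [size]

@[simp] lemma lmerge_empty_left (r : LPBT) : lmerge empty r = r := by
  cases r <;> rw [lmerge]

@[simp] lemma lmerge_empty_right (l : LPBT) : lmerge l empty = l := by
  cases l with
  | empty => rw [lmerge]
  | graft a x b => rw [lmerge]; simp

lemma lmerge_graft (a : LPBT) (x : ℕ) (b c : LPBT) (y : ℕ) (d : LPBT) :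
    lmerge (graft a x b) (graft c y d) =
      if x < y then graft a x (lmerge b (graft c y d))
      else graft (lmerge (graft a x b) c) y d := by
  rw [lmerge]

@[simp] lemma size_lmerge (L R : LPBT) : (lmerge L R).size = L.size + R.size := by
  induction L, R using lmerge.induct with
  | case1 r => simp [size]
  | case2 l h => simp [size]
  | case3 a x b c y d h ih => rw [lmerge_graft]; simp only [h, if_true, size, ih]; omega
  | case4 a x b c y d h ih => rw [lmerge_graft]; simp only [h, if_false, size, ih]; omega

lemma inorder_lmerge (L R : LPBT) :
    (lmerge L R).inorder.Perm (L.inorder ++ R.inorder) := by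
  induction L, R using lmerge.induct with
  | case1 r => simp [inorder]
  | case2 l h => simp [inorder]
  | case3 a x b c y d h ih =>
    rw [lmerge_graft]
    simp only [h, if_true, inorder]
    refine (List.Perm.append_left _ (List.Perm.cons _ ih)).trans ?_
    simp [inorder, List.append_assoc]
  | case4 a x b c y d h ih =>
    rw [lmerge_graft]
    simp only [h, if_false, inorder]
    refine (List.Perm.append_right _ ih).trans ?_
    simp [inorder, List.append_assoc]

lemma root_lmerge {L R : LPBT} {b : ℕ} (h : b ∈ (lmerge L R).rootLabel?) :
    b ∈ L.rootLabel? ∨ b ∈ R.rootLabel? := by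
  cases L with
  | empty => simp at h; right; exact h
  | graft a x bb =>
    cases R with
    | empty => simp at h; left; exact h
    | graft c y d =>
      rw [lmerge_graft] at h
      by_cases hxy : x < y
      · simp [hxy, rootLabel?] at h ⊢; left; exact h
      · simp [hxy, rootLabel?] at h ⊢; right; exact h

lemma increasing_lmerge {L R : LPBT} (hL : L.IsIncreasing) (hR : R.IsIncreasing)
    (hd : ∀ u ∈ L.inorder, ∀ v ∈ R.inorder, u ≠ v) : (lmerge L R).IsIncreasing := by
  induction L, R using lmerge.induct with
  | case1 r => simpa using hR
  | case2 l h => simpa using hL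
  | case3 a x b c y d h ih =>
    obtain ⟨h1, h2, ha, hb⟩ := hL
    rw [lmerge_graft]
    simp only [h, if_true]
    refine ⟨h1, ?_, ha, ?_⟩
    · intro b' hb'
      rcases root_lmerge hb' with hm | hm
      · exact h2 b' hm
      · simp only [rootLabel?, Option.mem_def, Option.some.injEq] at hm
        omega
    · refine ih hb hR ?_
      intro u hu v hv
      refine hd u ?_ v hv
      simp [inorder, hu]
  | case4 a x b c y d h ih =>
    obtain ⟨g1, g2, hc, hd'⟩ := hR
    rw [lmerge_graft]
    simp only [h, if_false]
    have hxy : y < x := by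
      have hne : x ≠ y := by
        refine hd x ?_ y ?_
        · simp [inorder]
        · simp [inorder]
      omega
    refine ⟨?_, g2, ?_, hd'⟩
    · intro b' hb'
      rcases root_lmerge hb' with hm | hm
      · simp only [rootLabel?, Option.mem_def, Option.some.injEq] at hm
        omega
      · exact g1 b' hm
    · refine ih hL hc ?_
      intro u hu v hv
      refine hd u hu v ?_
      simp [inorder, hv]

/-- M1 : splicing a merge recovers the two pieces. -/
lemma lsplice_lmerge (L R : LPBT) : lsplice (lmerge L R) L.size = (L, R) := by
  induction L, R using lmerge.induct with
  | case1 r => simp [size]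
  | case2 l h => simp
  | case3 a x b c y d h ih =>
    rw [lmerge_graft]
    simp only [h, if_true]
    have hgt : ¬ ((graft a x b).size ≤ a.size) := by simp [size]
    simp only [lsplice, hgt, if_false]
    have he : (graft a x b).size - a.size - 1 = b.size := by simp [size]; omega
    rw [he, ih]
  | case4 a x b c y d h ih =>
    rw [lmerge_graft]
    simp only [h, if_false]
    have hle : (graft a x b).size ≤ (lmerge (graft a x b) c).size := by simp
    simp only [lsplice, hle, if_true, ih]

/-- M2 : merging the two pieces of a splice of an increasing tree recovers it. -/
lemma lmerge_lsplice {L : LPBT} (hL : L.IsIncreasing) :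
    ∀ i, i ≤ L.size → lmerge (lsplice L i).1 (lsplice L i).2 = L := by
  induction L with
  | empty => intro i hi; simp [lsplice]
  | graft l a r ihl ihr =>
    intro i hi
    obtain ⟨h1, h2, hl, hr⟩ := hL
    by_cases h' : i ≤ l.size
    · simp only [lsplice, h', if_true]
      cases hp : (lsplice l i).1 with
      | empty =>
        have hi0 : i = 0 := by
          have := (lsplice_sizes l i h').1
          rw [hp] at this
          simpa [size] using this.symm
        subst hi0
        simp
      | graft p x q =>
        have hx : x ∈ l.inorder :=
          lsplice_mem h' (Or.inl (root_mem (by rw [hp]; simp [rootLabel?])))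
        have hax : a < x := root_lt_all h1 hl x hx
        rw [lmerge_graft]
        simp only [show ¬ (x < a) by omega, if_false]
        rw [← hp, ihl hl i h']
    · have hr' : i - l.size - 1 ≤ r.size := by simp [size] at hi; omega
      simp only [lsplice, h', if_false]
      cases hp : (lsplice r (i - l.size - 1)).2 with
      | empty =>
        have : (lsplice r (i - l.size - 1)).1 = r := by
          have h2' := (lsplice_sizes r _ hr').2
          rw [hp] at h2'
          have : i - l.size - 1 = r.size := by simp [size] at h2'; omega
          rw [this, lsplice_self]
        rw [this]
        simp
      | graft p y q =>
        have hy : y ∈ r.inorder :=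
          lsplice_mem hr' (Or.inr (root_mem (by rw [hp]; simp [rootLabel?])))
        have hay : a < y := root_lt_all h2 hr y hy
        rw [lmerge_graft]
        simp only [hay, if_true]
        rw [← hp, ihr hr _ hr']

def LSG (L : LPBT) (i : ℕ) (v : ℕ) : LPBT :=
  graft (lsplice L i).1 v (lsplice L i).2

def strip : LPBT → LPBT
  | empty => empty
  | graft l _ r => lmerge l r

def pos : LPBT → ℕ
  | empty => 0
  | graft l _ _ => l.size

lemma shape_LSG (L : LPBT) (i v : ℕ) : (LSG L i v).shape = (L.shape).SG i := by
  simp [LSG, shape, PBT.SG, lsplice_shape L i]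

lemma size_LSG (L : LPBT) {i : ℕ} (v : ℕ) (h : i ≤ L.size) :
    (LSG L i v).size = L.size + 1 := by
  obtain ⟨e1, e2⟩ := lsplice_sizes L i h
  simp [LSG, size, e1, e2]; omega

lemma inorder_LSG (L : LPBT) (i v : ℕ) :
    (LSG L i v).inorder = (lsplice L i).1.inorder ++ v :: (lsplice L i).2.inorder := rfl

lemma inorder_LSG_perm (L : LPBT) {i : ℕ} (v : ℕ) (h : i ≤ L.size) :
    (LSG L i v).inorder.Perm (v :: L.inorder) := by
  rw [inorder_LSG]
  refine List.perm_middle.trans ?_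
  rw [(lsplice_inorder L i h).1]

lemma increasing_LSG {L : LPBT} {i v : ℕ} (hL : L.IsIncreasing) (h : i ≤ L.size)
    (hv : ∀ c ∈ L.inorder, v < c) : (LSG L i v).IsIncreasing := by
  obtain ⟨p1, p2⟩ := increasing_lsplice hL i h
  refine ⟨?_, ?_, p1, p2⟩
  · intro b hb
    exact hv b (lsplice_mem h (Or.inl (root_mem hb)))
  · intro b hb
    exact hv b (lsplice_mem h (Or.inr (root_mem hb)))

lemma strip_LSG {L : LPBT} {i : ℕ} (v : ℕ) (hL : L.IsIncreasing) (h : i ≤ L.size) :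
    strip (LSG L i v) = L := by
  simp only [LSG, strip]
  exact lmerge_lsplice hL i h

lemma pos_LSG (L : LPBT) {i : ℕ} (v : ℕ) (h : i ≤ L.size) : pos (LSG L i v) = i := by
  simp only [LSG, pos]
  exact (lsplice_sizes L i h).1

@[simp] lemma rootLabel_LSG (L : LPBT) (i v : ℕ) : (LSG L i v).rootLabel? = some v := rfl

end LPBT

lemma countP_eq_sum (a : ℕ) (l : List ℕ) :
    (l.countP fun x => decide (x < a)) = ∑ j : Fin l.length, if l.get j < a then 1 else 0 := by
  induction l with
  | nil => simp
  | cons b l ih => rw [List.countP_cons]; simp only [List.length_cons]; rw [Fin.sum_univ_succ]; simp [ih]; rw [add_comm]; congr 1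

@[simp] lemma invCount_nil : invCount [] = 0 := by
  simp [invCount]

lemma invCount_cons (a : ℕ) (l : List ℕ) :
    invCount (a :: l) = (l.countP fun x => decide (x < a)) + invCount l := by
  rw [invCount, invCount, Finset.card_filter, Finset.card_filter,
    Fintype.sum_prod_type]
  simp only [List.length_cons]
  rw [Fin.sum_univ_succ]
  congr 1
  · rw [Fin.sum_univ_succ]
    simp only [Fin.lt_def, Fin.val_zero, Nat.lt_irrefl, false_and, if_false,
      List.get_cons_succ', List.get_cons_zero, Fin.val_succ, zero_add]
    rw [countP_eq_sum]
    refine Finset.sum_congr rfl fun j _ => ?_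
    simp
  · rw [Fintype.sum_prod_type]
    refine Finset.sum_congr rfl fun i _ => ?_
    rw [Fin.sum_univ_succ]
    have h0 : ¬ (i.succ < (0 : Fin (l.length + 1))) := by simp [Fin.lt_def]
    simp only [h0, false_and, if_false, zero_add, List.get_cons_succ',
      Fin.succ_lt_succ_iff]

lemma invCount_insert_min (w₁ w₂ : List ℕ) (v : ℕ) (h : ∀ c ∈ w₁ ++ w₂, v < c) :
    invCount (w₁ ++ v :: w₂) = invCount (w₁ ++ w₂) + w₁.length := by
  induction w₁ with
  | nil =>
    simp only [List.nil_append, invCount_cons, List.length_nil, add_zero]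
    have h0 : w₂.countP (fun x => decide (x < v)) = 0 := by
      refine List.countP_eq_zero.2 fun c hc => by
        have := h c (by simpa using hc)
        simpa using by omega
    omega
  | cons b w₁ ih =>
    simp only [List.cons_append, invCount_cons]
    rw [List.countP_append, List.countP_append, List.countP_cons]
    rw [ih fun c hc => h c (List.mem_cons_of_mem _ hc)]
    have hvb : v < b := h b (by simp)
    have : (decide (v < b)) = true := by simpa using hvb
    simp only [this, if_true, List.length_cons]
    omega

namespace LPBT

lemma invCount_LSG (L : LPBT) {i : ℕ} (v : ℕ) (h : i ≤ L.size)
    (hv : ∀ c ∈ L.inorder, v < c) :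
    invCount (LSG L i v).inorder = invCount L.inorder + i := by
  obtain ⟨e1, e2⟩ := lsplice_inorder L i h
  rw [inorder_LSG]
  rw [invCount_insert_min _ _ v (by rw [e1]; exact hv), e1]
  congr 1
  rw [inorder_length, e2]

/-- Build a labeled tree from a sequence of insertion positions; step `k`
inserts a new root with label `n - k` at position `idx k`. -/
def build (idx : ℕ → ℕ) (n : ℕ) : ℕ → LPBT
  | 0 => empty
  | k + 1 => LSG (build idx n k) (idx k) (n - k)

lemma build_invariant (idx : ℕ → ℕ) (n : ℕ) :
    ∀ k, k ≤ n → (∀ j, j < k → idx j ≤ j) →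
      (build idx n k).size = k ∧ (build idx n k).IsIncreasing ∧
      (build idx n k).inorder.Perm (List.range' (n - k + 1) k) ∧
      invCount (build idx n k).inorder = ∑ j ∈ Finset.range k, idx j := by
  intro k
  induction k with
  | zero => intro _ _; exact ⟨rfl, trivial, by simp [build, inorder], by simp [build, inorder]⟩
  | succ k ih =>
    intro hk hidx
    obtain ⟨hsz, hinc, hperm, hinv⟩ := ih (by omega) fun j hj => hidx j (by omega)
    have hik : idx k ≤ (build idx n k).size := by rw [hsz]; exact hidx k (by omega)
    have hv : ∀ c ∈ (build idx n k).inorder, n - k < c := by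
      intro c hc
      have := hperm.mem_iff.1 hc
      rw [List.mem_range'_1] at this
      omega
    refine ⟨?_, ?_, ?_, ?_⟩
    · rw [build, size_LSG _ _ hik, hsz]
    · exact increasing_LSG hinc hik hv
    · rw [build]
      refine (inorder_LSG_perm _ _ hik).trans ?_
      have hr : List.range' (n - (k + 1) + 1) (k + 1) = (n - k) :: List.range' (n - k + 1) k := by
        have e : n - (k + 1) + 1 = n - k := by omega
        rw [e]
        rfl
      rw [hr]
      exact hperm.cons _
    · rw [build, invCount_LSG _ _ hik hv, hinv, Finset.sum_range_succ]

lemma build_strip (idx : ℕ → ℕ) (n k : ℕ) (hk : k + 1 ≤ n) (hidx : ∀ j, j < k + 1 → idx j ≤ j) :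
    strip (build idx n (k + 1)) = build idx n k ∧ pos (build idx n (k + 1)) = idx k := by
  obtain ⟨hsz, hinc, _, _⟩ := build_invariant idx n k (by omega) fun j hj => hidx j (by omega)
  have hik : idx k ≤ (build idx n k).size := by rw [hsz]; exact hidx k (by omega)
  exact ⟨strip_LSG _ hinc hik, pos_LSG _ _ hik⟩

lemma build_congr {idx idx' : ℕ → ℕ} (n : ℕ) :
    ∀ k, (∀ j, j < k → idx j = idx' j) → build idx n k = build idx' n k := by
  intro k
  induction k with
  | zero => intro _; rfl
  | succ k ih =>
    intro h
    rw [build, build, ih fun j hj => h j (by omega), h k (by omega)]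

lemma build_cancel {idx idx' : ℕ → ℕ} {n : ℕ}
    (hidx : ∀ j, j < n → idx j ≤ j) (hidx' : ∀ j, j < n → idx' j ≤ j)
    (heq : build idx n n = build idx' n n) :
    ∀ d, d ≤ n → build idx n (n - d) = build idx' n (n - d) ∧
      (∀ j, n - d ≤ j → j < n → idx j = idx' j) := by
  intro d
  induction d with
  | zero => intro _; simpa using ⟨heq, by omega⟩
  | succ d ih =>
    intro hd
    obtain ⟨hb, hj⟩ := ih (by omega)
    have hkd : n - d = (n - (d + 1)) + 1 := by omega
    rw [hkd] at hb
    obtain ⟨s1, p1⟩ := build_strip idx n (n - (d+1)) (by omega) fun j hj => hidx j (by omega)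
    obtain ⟨s2, p2⟩ := build_strip idx' n (n - (d+1)) (by omega) fun j hj => hidx' j (by omega)
    refine ⟨by rw [← s1, ← s2, hb], ?_⟩
    intro j hj1 hj2
    by_cases hcase : j = n - (d + 1)
    · subst hcase
      rw [← p1, ← p2, hb]
    · exact hj j (by omega) hj2

end LPBT

namespace LPBT

lemma peel_step {N : LPBT} {a s : ℕ} (hinc : N.IsIncreasing)
    (hperm : N.inorder.Perm (List.range' a (s + 1))) :
    (strip N).IsIncreasing ∧ (strip N).inorder.Perm (List.range' (a + 1) s) ∧
      N = LSG (strip N) (pos N) a ∧ pos N ≤ s ∧ N.size = s + 1 := by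
  have hsz : N.size = s + 1 := by
    have := hperm.length_eq
    simpa [inorder_length] using this
  cases N with
  | empty => simp [size] at hsz
  | graft l v r =>
    have hva : v = a := by
      have hmem : a ∈ (graft l v r).inorder := by
        rw [hperm.mem_iff, List.mem_range'_1]
        omega
      have h1 : v ≤ a := rootmin hinc v (by simp [rootLabel?]) a hmem
      have h2 : a ≤ v := by
        have : v ∈ (graft l v r).inorder := root_mem (by simp [rootLabel?])
        rw [hperm.mem_iff, List.mem_range'_1] at this
        omega
      omega
    subst hva
    obtain ⟨h1, h2, hl, hr⟩ := hinc
    have hnd : (graft l v r).inorder.Nodup := hperm.nodup_iff.2 List.nodup_range'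
    have hdisj : ∀ u ∈ l.inorder, ∀ w ∈ r.inorder, u ≠ w := by
      rw [inorder, List.nodup_append] at hnd
      intro u hu w hw
      exact fun huw => hnd.2.2 u hu w (by simp [hw]) huw
    have hstripinc : (strip (graft l v r)).IsIncreasing := by
      simpa [strip] using increasing_lmerge hl hr hdisj
    have hpermstrip : (strip (graft l v r)).inorder.Perm (List.range' (v + 1) s) := by
      have h3 : (strip (graft l v r)).inorder.Perm (l.inorder ++ r.inorder) := by
        simpa [strip] using inorder_lmerge l r
      have h4 : (v :: (l.inorder ++ r.inorder)).Perm (List.range' v (s + 1)) := by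
        refine (List.perm_middle.symm).trans ?_
        exact hperm
      have h5 : List.range' v (s + 1) = v :: List.range' (v + 1) s := rfl
      rw [h5] at h4
      exact h3.trans h4.cons_inv
    refine ⟨hstripinc, hpermstrip, ?_, ?_, hsz⟩
    · show graft l v r = LSG (lmerge l r) l.size v
      rw [LSG, lsplice_lmerge]
    · simp only [pos]
      simp [size] at hsz
      omega

lemma peel_invariant {n : ℕ} {L : LPBT} (hinc : L.IsIncreasing)
    (hperm : L.inorder.Perm (List.range' 1 n)) :
    ∀ m, m ≤ n → (strip^[m] L).IsIncreasing ∧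
      (strip^[m] L).inorder.Perm (List.range' (m + 1) (n - m)) := by
  intro m
  induction m with
  | zero => intro _; simpa using ⟨hinc, hperm⟩
  | succ m ih =>
    intro hm
    obtain ⟨ha, hb⟩ := ih (by omega)
    have hnm : n - m = (n - (m + 1)) + 1 := by omega
    rw [hnm] at hb
    obtain ⟨c1, c2, _, _, _⟩ := peel_step ha hb
    rw [Function.iterate_succ_apply']
    exact ⟨c1, by simpa using c2⟩

lemma peel_build {n : ℕ} {L : LPBT} (hinc : L.IsIncreasing)
    (hperm : L.inorder.Perm (List.range' 1 n)) :
    (∀ j, j < n → pos (strip^[n - (j + 1)] L) ≤ j) ∧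
      ∀ k, k ≤ n → build (fun j => pos (strip^[n - (j + 1)] L)) n k = strip^[n - k] L := by
  have key : ∀ m, m < n → strip^[m] L = LSG (strip^[m + 1] L) (pos (strip^[m] L)) (m + 1)
      ∧ pos (strip^[m] L) ≤ n - (m + 1) := by
    intro m hm
    obtain ⟨ha, hb⟩ := peel_invariant hinc hperm m (by omega)
    have hnm : n - m = (n - (m + 1)) + 1 := by omega
    rw [hnm] at hb
    obtain ⟨_, _, c3, c4, _⟩ := peel_step ha hb
    refine ⟨?_, c4⟩
    rw [Function.iterate_succ_apply']
    exact c3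
  constructor
  · intro j hj
    have := (key (n - (j + 1)) (by omega)).2
    have he : n - (n - (j + 1) + 1) = j := by omega
    omega
  · intro k
    induction k with
    | zero =>
      intro _
      have h1 := (peel_invariant hinc hperm n le_rfl).2
      simp only [Nat.sub_self] at h1
      have h2 : (strip^[n] L).inorder = [] := List.Perm.eq_nil (by simpa using h1)
      have h3 : (strip^[n] L).size = 0 := by rw [← inorder_length, h2]; rfl
      simp only [Nat.sub_zero]
      rw [size_eq_zero h3]
      rfl
    | succ k ih =>
      intro hk
      have hb := ih (by omega)
      have hm : n - (k + 1) < n := by omega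
      obtain ⟨c3, _⟩ := key (n - (k + 1)) hm
      have e1 : n - (k + 1) + 1 = n - k := by omega
      rw [e1] at c3
      rw [build, hb, ← c3]

end LPBT

def extend (n : ℕ) (q : Fin n → ℕ) : ℕ → ℕ := fun j => if h : j < n then q ⟨j, h⟩ else 0

section PathLemmas

variable {n : ℕ} {p1 : Fin (n + 1) → PBT} {p2 : Fin n → ℕ}

lemma path_size (h0 : p1 0 = PBT.empty)
    (hstep : ∀ k : Fin n, p2 k ≤ (p1 k.castSucc).size ∧
      p1 k.succ = (p1 k.castSucc).SG (p2 k)) :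
    ∀ m (hm : m < n + 1), (p1 ⟨m, hm⟩).size = m := by
  intro m
  induction m with
  | zero => intro hm; rw [show (⟨0, hm⟩ : Fin (n + 1)) = 0 from rfl, h0]; rfl
  | succ m ih =>
    intro hm
    have hkn : m < n := by omega
    have e1 : (⟨m + 1, hm⟩ : Fin (n + 1)) = (⟨m, hkn⟩ : Fin n).succ := rfl
    have e2 : (⟨m, by omega⟩ : Fin (n + 1)) = (⟨m, hkn⟩ : Fin n).castSucc := rfl
    rw [e1, (hstep ⟨m, hkn⟩).2, PBT.size_SG, ← e2, ih (by omega)]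

lemma path_bound (h0 : p1 0 = PBT.empty)
    (hstep : ∀ k : Fin n, p2 k ≤ (p1 k.castSucc).size ∧
      p1 k.succ = (p1 k.castSucc).SG (p2 k)) :
    ∀ j, j < n → extend n p2 j ≤ j := by
  intro j hj
  have e2 : (⟨j, by omega⟩ : Fin (n + 1)) = (⟨j, hj⟩ : Fin n).castSucc := rfl
  have := (hstep ⟨j, hj⟩).1
  rw [← e2, path_size h0 hstep j (by omega)] at this
  simpa [extend, hj] using this

lemma path_shape (h0 : p1 0 = PBT.empty)
    (hstep : ∀ k : Fin n, p2 k ≤ (p1 k.castSucc).size ∧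
      p1 k.succ = (p1 k.castSucc).SG (p2 k)) :
    ∀ m (hm : m ≤ n), (LPBT.build (extend n p2) n m).shape = p1 ⟨m, by omega⟩ := by
  intro m
  induction m with
  | zero => intro hm; rw [show (⟨0, by omega⟩ : Fin (n + 1)) = 0 from rfl, h0]; rfl
  | succ m ih =>
    intro hm
    have hkn : m < n := by omega
    have e1 : (⟨m + 1, by omega⟩ : Fin (n + 1)) = (⟨m, hkn⟩ : Fin n).succ := rfl
    have e2 : (⟨m, by omega⟩ : Fin (n + 1)) = (⟨m, hkn⟩ : Fin n).castSucc := rfl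
    rw [LPBT.build, LPBT.shape_LSG, ih (by omega), e1, (hstep ⟨m, hkn⟩).2, ← e2]
    congr 1
    simp [extend, hkn]

end PathLemmas

abbrev PathSub (n : ℕ) (T : PBT) : Type :=
  {p : (Fin (n + 1) → PBT) × (Fin n → ℕ) //
        p.1 0 = PBT.empty ∧ p.1 (Fin.last n) = T ∧
        ∀ k : Fin n, p.2 k ≤ (p.1 k.castSucc).size ∧
          p.1 k.succ = (p.1 k.castSucc).SG (p.2 k)}

theorem aux_partI (n : ℕ) (T : PBT) (hT : T.size = n) :
    (∑ᶠ p : PathSub n T,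
      (Polynomial.X : Polynomial ℕ) ^ (∑ k : Fin n, p.1.2 k))
      = (∑ᶠ L ∈ linExts T, (Polynomial.X : Polynomial ℕ) ^ invCount L.inorder) := by
  classical
  let F : PathSub n T → LPBT :=
    fun p => LPBT.build (extend n p.1.2) n n
  have hbnd : ∀ p : PathSub n T, ∀ j, j < n → extend n p.1.2 j ≤ j :=
    fun p => path_bound p.2.1 p.2.2.2
  have hb := fun p : PathSub n T => LPBT.build_invariant (extend n p.1.2) n n le_rfl (hbnd p)
  have hshape : ∀ p : PathSub n T, (F p).shape = T := by
    intro p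
    have := path_shape p.2.1 p.2.2.2 n le_rfl
    rw [show (⟨n, by omega⟩ : Fin (n + 1)) = Fin.last n from rfl] at this
    rw [show F p = LPBT.build (extend n p.1.2) n n from rfl, this, p.2.2.1]
  have hmem : ∀ p : PathSub n T, F p ∈ linExts T := by
    intro p
    refine ⟨hshape p, ?_, (hb p).2.1⟩
    rw [hT]
    have := (hb p).2.2.1
    simpa using this
  have hweight : ∀ p : PathSub n T, invCount (F p).inorder = ∑ k : Fin n, p.1.2 k := by
    intro p
    rw [show F p = LPBT.build (extend n p.1.2) n n from rfl, (hb p).2.2.2]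
    rw [← Fin.sum_univ_eq_sum_range (fun j => extend n p.1.2 j) n]
    exact Finset.sum_congr rfl fun k _ => by simp [extend, k.isLt]
  have hinj : Function.Injective F := by
    intro p q hpq
    have hext : extend n p.1.2 = extend n q.1.2 := by
      funext j
      by_cases hj : j < n
      · exact (LPBT.build_cancel (hbnd p) (hbnd q) hpq n le_rfl).2 j (by omega) hj
      · simp [extend, hj]
    have h2 : p.1.2 = q.1.2 := by
      funext k
      have := congrFun hext k.val
      simpa [extend, k.isLt] using this
    have h1 : p.1.1 = q.1.1 := by
      funext k
      have ep := path_shape p.2.1 p.2.2.2 k.val (by omega)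
      have eq' := path_shape q.2.1 q.2.2.2 k.val (by omega)
      rw [hext] at ep
      rw [show (⟨k.val, by omega⟩ : Fin (n + 1)) = k from Fin.eta k _] at ep eq'
      rw [← ep, ← eq']
    exact Subtype.ext (Prod.ext h1 h2)
  have hsurj : ∀ L ∈ linExts T, ∃ p, F p = L := by
    intro L hL
    obtain ⟨hs, hperm, hinc⟩ := hL
    rw [hT] at hperm
    set idxL : ℕ → ℕ := fun j => LPBT.pos (LPBT.strip^[n - (j + 1)] L) with hidxL
    obtain ⟨hbnd', hbuild⟩ := LPBT.peel_build hinc hperm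
    have hbi := fun (k : ℕ) (hk : k ≤ n) =>
      LPBT.build_invariant idxL n k hk (fun j hj => hbnd' j (by omega))
    have c0 : (fun k : Fin (n + 1) => (LPBT.build idxL n k.val).shape) 0 = PBT.empty := rfl
    have clast : (fun k : Fin (n + 1) => (LPBT.build idxL n k.val).shape) (Fin.last n) = T := by
      show (LPBT.build idxL n n).shape = T
      rw [hbuild n le_rfl]
      simpa using hs
    have cstep : ∀ k : Fin n,
        (fun k : Fin n => idxL k.val) k ≤
          ((fun k : Fin (n + 1) => (LPBT.build idxL n k.val).shape) k.castSucc).size ∧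
        (fun k : Fin (n + 1) => (LPBT.build idxL n k.val).shape) k.succ =
          (((fun k : Fin (n + 1) => (LPBT.build idxL n k.val).shape) k.castSucc)).SG
            ((fun k : Fin n => idxL k.val) k) := by
      intro k
      constructor
      · show idxL k.val ≤ (LPBT.build idxL n k.castSucc.val).shape.size
        rw [LPBT.shape_size, Fin.coe_castSucc, (hbi k.val (by omega)).1]
        exact hbnd' k.val k.isLt
      · show (LPBT.build idxL n k.succ.val).shape = _
        rw [Fin.val_succ, LPBT.build, LPBT.shape_LSG]
        rfl
    refine ⟨⟨(fun k : Fin (n + 1) => (LPBT.build idxL n k.val).shape,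
      fun k : Fin n => idxL k.val), c0, clast, cstep⟩, ?_⟩
    show LPBT.build (extend n fun k : Fin n => idxL k.val) n n = L
    rw [LPBT.build_congr n n (idx' := idxL) (fun j hj => by simp [extend, hj])]
    rw [hbuild n le_rfl]
    simp
  have hrange : linExts T = Set.range F :=
    Set.ext fun L => ⟨fun h => hsurj L h, fun ⟨p, hp⟩ => hp ▸ hmem p⟩
  rw [hrange, finsum_mem_range hinj]
  exact finsum_congr fun p => by rw [hweight p]

lemma star_iter_size (T : PBT) : ∀ m, (PBT.star^[m] T).size = T.size - m := by
  intro m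
  induction m with
  | zero => simp
  | succ m ih =>
    rw [Function.iterate_succ_apply', PBT.size_star, ih]
    omega

theorem aux_partII (n : ℕ) (T : PBT) (hT : T.size = n) :
    ∃! p : Fin (n + 1) → PBT,
      p 0 = PBT.empty ∧ p (Fin.last n) = T ∧
        ∀ k : Fin n, p k.castSucc = (p k.succ).star := by
  refine ⟨fun k => PBT.star^[n - k.val] T, ⟨?_, ?_, ?_⟩, ?_⟩
  · show PBT.star^[n - 0] T = PBT.empty
    apply PBT.size_eq_zero
    rw [star_iter_size, hT]
    omega
  · show PBT.star^[n - n] T = T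
    simp
  · intro k
    show PBT.star^[n - k.castSucc.val] T = (PBT.star^[n - k.succ.val] T).star
    have hlt := k.isLt
    rw [Fin.coe_castSucc, Fin.val_succ, show n - k.val = (n - (k.val + 1)) + 1 by omega,
      Function.iterate_succ_apply']
  · intro q ⟨hq0, hqlast, hqstep⟩
    have claim : ∀ d, d ≤ n → q ⟨n - d, by omega⟩ = PBT.star^[d] T := by
      intro d
      induction d with
      | zero =>
        intro _
        rw [show (⟨n - 0, by omega⟩ : Fin (n + 1)) = Fin.last n by
          apply Fin.ext; simp]
        simpa using hqlast
      | succ d ih =>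
        intro hd
        have hk : n - (d + 1) < n := by omega
        have e1 : (⟨n - (d + 1), by omega⟩ : Fin (n + 1)) = (⟨n - (d + 1), hk⟩ : Fin n).castSucc := rfl
        have e2 : (⟨n - (d + 1), hk⟩ : Fin n).succ = (⟨n - d, by omega⟩ : Fin (n + 1)) := by
          apply Fin.ext
          simp [Fin.val_succ]
          omega
        rw [e1, hqstep ⟨n - (d + 1), hk⟩, e2, ih (by omega)]
        exact (Function.iterate_succ_apply' PBT.star d T).symm
    funext k
    have hv : k.val ≤ n := by omega
    have := claim (n - k.val) (by omega)
    rw [show (⟨n - (n - k.val), by omega⟩ : Fin (n + 1)) = k by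
      apply Fin.ext; simp; omega] at this
    rw [this]


/-- Let `T` be a plane binary tree with `n` internal nodes.  Then:
(i) the weight generating function of paths from `∅` to `T` in `Tree` — the sum over all
sequences `∅ = T₀, T₁, …, T_n = T` together with leaf indices `i₁, …, i_n` with
`T_k = SG(T_{k-1}, i_k)`, of `q^{i₁ + ⋯ + i_n}` — equals `∑_{e ∈ E(T)} q^{inv(w_e)}`;
and (ii) there is exactly one sequence `∅ = T₀, T₁, …, T_n = T` with
`T_{k-1} = (T_k)*` for all `k`. -/
theorem stmt_12 (n : ℕ) (T : PBT) (hT : T.size = n) :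
    (∑ᶠ p : {p : (Fin (n + 1) → PBT) × (Fin n → ℕ) //
        p.1 0 = PBT.empty ∧ p.1 (Fin.last n) = T ∧
        ∀ k : Fin n, p.2 k ≤ (p.1 k.castSucc).size ∧
          p.1 k.succ = (p.1 k.castSucc).SG (p.2 k)},
      (X : Polynomial ℕ) ^ (∑ k : Fin n, p.1.2 k))
      = (∑ᶠ L ∈ linExts T, (X : Polynomial ℕ) ^ invCount L.inorder) ∧
    (∃! p : Fin (n + 1) → PBT,
      p 0 = PBT.empty ∧ p (Fin.last n) = T ∧
        ∀ k : Fin n, p k.castSucc = (p k.succ).star) := by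
  exact ⟨aux_partI n T hT, aux_partII n T hT⟩
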